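/- arXiv:1409.2457 — 2 statements merged into one kernel-verified Lean document; each statement's English description precedes it below -/
import Mathlib

section
/- (Correctness of the 1-sided CPS-3F graph formulation.) Let A = (a_1,...,a_m) and B = (b_1,...,b_n) be chains in a metric space and δ_1, δ_3 > 0. Define the directed graph G with vertex set { (i,p,j) : d(a_i, a_p) ≤ δ_1 and d(a_p, b_j) ≤ δ_3 } and edges from (i,p,j) to (i',p',j') iff i ≤ i' ≤ i+1, p ≤ p', j ≤ j' ≤ j+1, and the tuples are distinct. Then there exists a subsequence A' of A with |A'| ≤ k, d_dF(A, A') ≤ δ_1, and d_dF(A', B) ≤ δ_3 if and only if there exist a starting configuration s = (1, p_0, 1) and final configuration t = (m, p_1, n) in G and a directed path from s to t along which the second coordinate strictly increases at most k − 1 times. -/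
/-- One step of a monotone coupling on 0-based index pairs:
each index advances by 0 or 1, and at least one advances. -/
def StepN (p q : ℕ × ℕ) : Prop :=
  p.1 ≤ q.1 ∧ q.1 ≤ p.1 + 1 ∧ p.2 ≤ q.2 ∧ q.2 ≤ p.2 + 1 ∧ p ≠ q

/-- A coupling of sequences of lengths `la` and `lb`: starts at `(0,0)`,
ends at `(la-1, lb-1)`, and advances by `StepN`. -/
def IsCouplingL (la lb : ℕ) (c : List (ℕ × ℕ)) : Prop :=
  c.head? = some (0, 0) ∧ c.getLast? = some (la - 1, lb - 1) ∧ c.Chain' StepN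

/-- The maximal pointwise distance along a coupling. -/
noncomputable def costL {X : Type*} [MetricSpace X] [Inhabited X]
    (P Q : List X) (c : List (ℕ × ℕ)) : ℝ :=
  (c.map (fun p => dist (P.getD p.1 default) (Q.getD p.2 default))).foldr max 0

/-- The discrete Fréchet distance of two finite sequences (lists) of points. -/
noncomputable def dFL {X : Type*} [MetricSpace X] [Inhabited X] (P Q : List X) : ℝ :=
  sInf { r | ∃ c, IsCouplingL P.length Q.length c ∧ costL P Q c = r }

/-- A possible configuration `(i,p,j)` (1-based) of the 1-sided problem. -/
def Ok3 {X : Type*} [MetricSpace X] [Inhabited X] (A B : List X)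
    (δ1 δ3 : ℝ) (v : ℕ × ℕ × ℕ) : Prop :=
  1 ≤ v.1 ∧ v.1 ≤ A.length ∧ 1 ≤ v.2.1 ∧ v.2.1 ≤ A.length ∧
  1 ≤ v.2.2 ∧ v.2.2 ≤ B.length ∧
  dist (A.getD (v.1 - 1) default) (A.getD (v.2.1 - 1) default) ≤ δ1 ∧
  dist (A.getD (v.2.1 - 1) default) (B.getD (v.2.2 - 1) default) ≤ δ3

/-- An edge of the 1-sided configuration graph: `i ≤ i' ≤ i+1`, `p ≤ p'`,
`j ≤ j' ≤ j+1`, distinct configurations, both possible. -/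
def Edge3 {X : Type*} [MetricSpace X] [Inhabited X] (A B : List X)
    (δ1 δ3 : ℝ) (v w : ℕ × ℕ × ℕ) : Prop :=
  Ok3 A B δ1 δ3 v ∧ Ok3 A B δ1 δ3 w ∧
  v.1 ≤ w.1 ∧ w.1 ≤ v.1 + 1 ∧ v.2.1 ≤ w.2.1 ∧
  v.2.2 ≤ w.2.2 ∧ w.2.2 ≤ v.2.2 + 1 ∧ v ≠ w

/- ---------- basic foldr max lemmas ---------- -/

lemma foldr_max_nonneg (l : List ℝ) : 0 ≤ l.foldr max 0 := by
  induction l with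
  | nil => simp
  | cons x t ih => exact le_trans ih (le_max_right _ _)

lemma le_foldr_max {l : List ℝ} {x : ℝ} (h : x ∈ l) : x ≤ l.foldr max 0 := by
  induction l with
  | nil => simp at h
  | cons y t ih =>
    rcases List.mem_cons.1 h with rfl | h
    · exact le_max_left _ _
    · exact le_trans (ih h) (le_max_right _ _)

lemma foldr_max_le {l : List ℝ} {δ : ℝ} (h0 : 0 ≤ δ) (h : ∀ x ∈ l, x ≤ δ) :
    l.foldr max 0 ≤ δ := by
  induction l with
  | nil => simpa
  | cons y t ih =>
    exact max_le (h y (by simp)) (ih fun x hx => h x (List.mem_cons_of_mem _ hx))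

lemma foldr_max_mem (l : List ℝ) : l.foldr max 0 ∈ insert (0:ℝ) {x | x ∈ l} := by
  induction l with
  | nil => simp
  | cons y t ih =>
    rcases max_choice y (t.foldr max 0) with h | h
    · simp only [List.foldr_cons, h]; right; simp
    · simp only [List.foldr_cons, h]
      rcases ih with h' | h'
      · left; exact h'
      · right; exact List.mem_cons_of_mem _ h'

lemma costL_nonneg {X : Type*} [MetricSpace X] [Inhabited X]
    (P Q : List X) (c : List (ℕ × ℕ)) : 0 ≤ costL P Q c := foldr_max_nonneg _

lemma dist_le_costL {X : Type*} [MetricSpace X] [Inhabited X]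
    {P Q : List X} {c : List (ℕ × ℕ)} {e : ℕ × ℕ} (h : e ∈ c) :
    dist (P.getD e.1 default) (Q.getD e.2 default) ≤ costL P Q c :=
  le_foldr_max (List.mem_map_of_mem h)

lemma costL_le {X : Type*} [MetricSpace X] [Inhabited X]
    {P Q : List X} {c : List (ℕ × ℕ)} {δ : ℝ} (h0 : 0 ≤ δ)
    (h : ∀ e ∈ c, dist (P.getD e.1 default) (Q.getD e.2 default) ≤ δ) :
    costL P Q c ≤ δ := by
  refine foldr_max_le h0 ?_
  intro x hx
  rcases List.mem_map.1 hx with ⟨e, he, rfl⟩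
  exact h e he

lemma dFL_le {X : Type*} [MetricSpace X] [Inhabited X]
    {P Q : List X} {c : List (ℕ × ℕ)} {δ : ℝ} (h0 : 0 ≤ δ)
    (hc : IsCouplingL P.length Q.length c)
    (h : ∀ e ∈ c, dist (P.getD e.1 default) (Q.getD e.2 default) ≤ δ) :
    dFL P Q ≤ δ := by
  have hmem : costL P Q c ∈ { r | ∃ c, IsCouplingL P.length Q.length c ∧ costL P Q c = r } :=
    ⟨c, hc, rfl⟩
  have hbdd : BddBelow { r | ∃ c, IsCouplingL P.length Q.length c ∧ costL P Q c = r } := by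
    refine ⟨0, ?_⟩
    rintro r ⟨c', _, rfl⟩
    exact costL_nonneg _ _ _
  exact le_trans (csInf_le hbdd hmem) (costL_le h0 h)

/- ---------- the stair coupling ---------- -/

def stair (a b : ℕ) : List (ℕ × ℕ) :=
  ((List.range (a+1)).map (fun i => (i, 0))) ++ ((List.range b).map (fun j => (a, j+1)))

lemma stair_head (a b : ℕ) : (stair a b).head? = some (0, 0) := by
  unfold stair
  rw [List.head?_append_of_ne_nil]
  · induction a with
    | zero => rfl
    | succ n ih =>
      rw [List.range_succ_eq_map]
      simp
  · simp [List.range_succ]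

lemma stair_last (a b : ℕ) : (stair a b).getLast? = some (a, b) := by
  unfold stair
  cases b with
  | zero =>
    simp only [List.range_zero, List.map_nil, List.append_nil]
    rw [List.range_succ, List.map_append]
    simp [List.getLast?_concat]
  | succ n =>
    rw [List.getLast?_append]
    rw [List.range_succ, List.map_append]
    simp [List.getLast?_concat]

lemma stair_chain (a b : ℕ) : (stair a b).Chain' StepN := by
  unfold stair
  rw [List.Chain', List.isChain_append]
  refine ⟨?_, ?_, ?_⟩
  · rw [List.isChain_map, List.isChain_range_succ]
    intro m _
    exact ⟨Nat.le_succ m, le_rfl, le_rfl, Nat.le_succ 0, by simp⟩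
  · rw [List.isChain_map]
    cases b with
    | zero => simp
    | succ n =>
      rw [List.isChain_range_succ]
      intro m _
      exact ⟨le_rfl, Nat.le_succ a, Nat.le_succ _, le_rfl, by simp⟩
  · intro x hx y hy
    have hx' : x = (a, 0) := by
      rw [List.range_succ, List.map_append] at hx
      simp only [List.map_cons, List.map_nil, List.getLast?_concat] at hx
      simpa using hx.symm
    cases b with
    | zero => simp at hy
    | succ n =>
      have hy' : y = (a, 1) := by
        rw [List.range_succ_eq_map] at hy
        simp at hy
        exact hy.symm
      subst hx' hy'
      exact ⟨le_rfl, Nat.le_succ a, Nat.le_succ 0, le_rfl, by simp⟩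

lemma stair_coupling (la lb : ℕ) : IsCouplingL la lb (stair (la-1) (lb-1)) :=
  ⟨stair_head _ _, stair_last _ _, stair_chain _ _⟩

/- ---------- extraction of a coupling from dFL ≤ δ ---------- -/

lemma exists_coupling_of_dFL_le {X : Type*} [MetricSpace X] [Inhabited X]
    {P Q : List X} {δ : ℝ} (h : dFL P Q ≤ δ) :
    ∃ c, IsCouplingL P.length Q.length c ∧
      ∀ e ∈ c, dist (P.getD e.1 default) (Q.getD e.2 default) ≤ δ := by
  set S := { r | ∃ c, IsCouplingL P.length Q.length c ∧ costL P Q c = r } with hS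
  have hne : S.Nonempty := ⟨_, stair (P.length-1) (Q.length-1), stair_coupling _ _, rfl⟩
  have hfin : S.Finite := by
    have hsub : S ⊆ insert (0:ℝ)
        ((fun pr : X × X => dist pr.1 pr.2) ''
          ((insert default {x | x ∈ P}) ×ˢ (insert default {x | x ∈ Q}))) := by
      rintro r ⟨c, _, rfl⟩
      have := foldr_max_mem (c.map (fun p => dist (P.getD p.1 default) (Q.getD p.2 default)))
      rcases this with h0 | hmem
      · left; exact h0
      · right
        rcases List.mem_map.1 hmem with ⟨e, _, heq⟩
        have hcc : costL P Q c = dist (P.getD e.1 default) (Q.getD e.2 default) := heq.symm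
        rw [hcc]
        refine ⟨(P.getD e.1 default, Q.getD e.2 default), ⟨?_, ?_⟩, rfl⟩
        · by_cases hlt : e.1 < P.length
          · right; show P.getD e.1 default ∈ {x | x ∈ P}; rw [List.getD_eq_getElem _ _ hlt]; exact List.getElem_mem hlt
          · left; show P.getD e.1 default = default; exact List.getD_eq_default _ _ (by omega)
        · by_cases hlt : e.2 < Q.length
          · right; show Q.getD e.2 default ∈ {x | x ∈ Q}; rw [List.getD_eq_getElem _ _ hlt]; exact List.getElem_mem hlt
          · left; show Q.getD e.2 default = default; exact List.getD_eq_default _ _ (by omega)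
    exact Set.Finite.subset (((P.finite_toSet.insert _).prod (Q.finite_toSet.insert _)).image _
      |>.insert _) hsub
  have : sInf S ∈ S := hne.csInf_mem hfin
  rcases this with ⟨c, hc, hcost⟩
  refine ⟨c, hc, fun e he => ?_⟩
  calc dist (P.getD e.1 default) (Q.getD e.2 default) ≤ costL P Q c := dist_le_costL he
    _ = sInf S := hcost
    _ ≤ δ := h

/- ---------- generic chain lemmas ---------- -/

lemma chain'_of_chain'_mem {α : Type*} {R S : α → α → Prop} {l : List α}
    (h : l.Chain' R) (himp : ∀ a ∈ l, ∀ b ∈ l, R a b → S a b) : l.Chain' S := by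
  rw [List.Chain', List.isChain_iff_getElem] at h ⊢
  intro i hi
  exact himp _ (List.getElem_mem _) _ (List.getElem_mem _) (h i hi)

lemma chain'_rel_getLast {α : Type*} {r : α → α → Prop} (htrans : Transitive r)
    (hrefl : Reflexive r) : ∀ {l : List α}, l.Chain' r → ∀ {v}, v ∈ l →
    ∀ {w}, l.getLast? = some w → r v w := by
  intro l
  induction l with
  | nil => intro _ v hv; simp at hv
  | cons a t ih =>
    intro h v hv w hw
    cases t with
    | nil =>
      simp at hv hw; subst hv; subst hw; exact hrefl v
    | cons b t' =>
      rw [List.getLast?_cons_cons] at hw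
      rw [List.Chain', List.isChain_cons_cons] at h
      rcases List.mem_cons.1 hv with rfl | hv'
      · exact htrans h.1 (ih h.2 (by simp) hw)
      · exact ih h.2 hv' hw

lemma chain'_rel_head {α : Type*} {r : α → α → Prop} (htrans : Transitive r)
    (hrefl : Reflexive r) : ∀ {l : List α}, l.Chain' r → ∀ {v}, v ∈ l →
    ∀ {w}, l.head? = some w → r w v := by
  intro l
  induction l with
  | nil => intro _ v hv; simp at hv
  | cons a t ih =>
    intro h v hv w hw
    simp at hw; subst hw
    rcases List.mem_cons.1 hv with rfl | hv'
    · exact hrefl v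
    · cases t with
      | nil => simp at hv'
      | cons b t' =>
        rw [List.Chain', List.isChain_cons_cons] at h
        exact htrans h.1 (ih h.2 hv' rfl)

/- ---------- counting strict increases of the middle coordinate ---------- -/

lemma countP_mid_le (t : List (ℕ × ℕ × ℕ)) : ∀ (v w : ℕ × ℕ × ℕ),
    List.Chain' (fun a b => a.2.1 ≤ b.2.1) (v :: t) → (v :: t).getLast? = some w →
    ((v :: t).zip t).countP (fun e => decide (e.1.2.1 < e.2.2.1)) + v.2.1 ≤ w.2.1 := by
  induction t with
  | nil =>
    intro v w _ hw
    simp at hw ⊢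
    subst hw; rfl
  | cons u t ih =>
    intro v w hc hw
    rw [List.getLast?_cons_cons] at hw
    rw [List.Chain', List.isChain_cons_cons] at hc
    have h2 := ih u w hc.2 hw
    rw [List.zip_cons_cons, List.countP_cons]
    by_cases h : v.2.1 < u.2.1 <;> simp [h] <;> omega

/- ---------- sublists from strictly increasing index lists ---------- -/

lemma map_getD_sublist {α : Type*} [Inhabited α] :
    ∀ (l : List α) (is : List ℕ), is.Chain' (· < ·) → (∀ i ∈ is, i < l.length) →
    (is.map (fun i => l.getD i default)).Sublist l := by
  intro l
  induction l with
  | nil =>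
    intro is _ hb
    cases is with
    | nil => simp
    | cons i is' => exact absurd (hb i (by simp)) (by simp)
  | cons a l' ih =>
    intro is hc hb
    cases is with
    | nil => simp
    | cons i is' =>
      have hpos : ∀ j ∈ is', i < j := by
        have := (List.isChain_iff_pairwise.1 hc)
        exact (List.pairwise_cons.1 this).1
      have hshift : ∀ (js : List ℕ), (∀ j ∈ js, 1 ≤ j) →
          js.map (fun j => (a :: l').getD j default)
            = (js.map (· - 1)).map (fun j => l'.getD j default) := by
        intro js hjs
        rw [List.map_map]
        apply List.map_congr_left
        intro j hj
        have hj1 := hjs j hj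
        obtain ⟨j', rfl⟩ : ∃ j', j = j' + 1 := ⟨j - 1, by omega⟩
        simp
      have hchainShift : ∀ (js : List ℕ), (∀ j ∈ js, 1 ≤ j) → js.Chain' (· < ·) →
          (js.map (· - 1)).Chain' (· < ·) := by
        intro js hjs hcj
        rw [List.Chain', List.isChain_map]
        refine chain'_of_chain'_mem hcj (fun x hx y hy hxy => ?_)
        have h1 := hjs x hx
        have h2 : x < y := hxy
        show x - 1 < y - 1
        omega
      cases i with
      | zero =>
        have h0 : (0 :: is').map (fun j => (a :: l').getD j default)
            = a :: (is'.map (· - 1)).map (fun j => l'.getD j default) := by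
          rw [List.map_cons, hshift is' (fun j hj => hpos j hj)]
          rfl
        rw [h0]
        refine List.Sublist.cons₂ a (ih _ ?_ ?_)
        · exact hchainShift _ (fun j hj => hpos j hj) (List.isChain_cons.1 hc).2
        · intro j hj
          rcases List.mem_map.1 hj with ⟨j', hj', rfl⟩
          have h1 := hb j' (by simp [hj'])
          have h2 := hpos j' hj'
          simp only [List.length_cons] at h1
          omega
      | succ i' =>
        have hall : ∀ j ∈ ((i' + 1) :: is'), 1 ≤ j := by
          intro j hj
          rcases List.mem_cons.1 hj with rfl | hj'
          · omega
          · have := hpos j hj'; omega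
        rw [hshift _ hall]
        refine List.Sublist.cons a (ih _ ?_ ?_)
        · exact hchainShift _ hall hc
        · intro j hj
          rcases List.mem_map.1 hj with ⟨j', hj', rfl⟩
          have h1 := hb j' hj'
          have h2 := hall j' hj'
          simp only [List.length_cons] at h1
          omega

def EdgeS (v w : ℕ × ℕ × ℕ) : Prop :=
  v.1 ≤ w.1 ∧ w.1 ≤ v.1 + 1 ∧ v.2.1 ≤ w.2.1 ∧
  v.2.2 ≤ w.2.2 ∧ w.2.2 ≤ v.2.2 + 1 ∧ v ≠ w

def merge : List (ℕ × ℕ) → List (ℕ × ℕ) → List (ℕ × ℕ × ℕ)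
  | [], _ => []
  | _ :: _, [] => []
  | [x], [y] => [(x.1, x.2, y.2)]
  | [x], y :: y' :: ys' => (x.1, x.2, y.2) :: merge [x] (y' :: ys')
  | x :: x' :: xs', [y] => (x.1, x.2, y.2) :: merge (x' :: xs') [y]
  | x :: x' :: xs', y :: y' :: ys' =>
    if x'.2 = x.2 then (x.1, x.2, y.2) :: merge (x' :: xs') (y :: y' :: ys')
    else if y'.1 = y.1 then (x.1, x.2, y.2) :: merge (x :: x' :: xs') (y' :: ys')
    else (x.1, x.2, y.2) :: merge (x' :: xs') (y' :: ys')
termination_by a b => a.length + b.length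
decreasing_by all_goals simp_wf <;> omega

def Rle (p q : ℕ × ℕ) : Prop := p.1 ≤ q.1 ∧ p.2 ≤ q.2

lemma rle_trans : Transitive Rle := fun _ _ _ h h' => ⟨le_trans h.1 h'.1, le_trans h.2 h'.2⟩
lemma rle_refl : Reflexive Rle := fun _ => ⟨le_rfl, le_rfl⟩

lemma chain_rle {l : List (ℕ × ℕ)} (h : l.Chain' StepN) : l.Chain' Rle :=
  h.imp (fun _ _ s => ⟨s.1, s.2.2.1⟩)

lemma getLast?_cons_of_ne_nil {α : Type*} (x : α) {l : List α} (h : l ≠ []) :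
    (x :: l).getLast? = l.getLast? := by
  cases l with
  | nil => exact absurd rfl h
  | cons a t => rw [List.getLast?_cons_cons]

lemma pne {p q : ℕ × ℕ} (h : p ≠ q) : p.1 ≠ q.1 ∨ p.2 ≠ q.2 := by
  by_contra h'
  push_neg at h'
  exact h (Prod.ext h'.1 h'.2)

lemma tne {v w : ℕ × ℕ × ℕ}
    (h : v.1 ≠ w.1 ∨ v.2.1 ≠ w.2.1 ∨ v.2.2 ≠ w.2.2) : v ≠ w := by
  intro he; subst he; simp at h

lemma mergeSpec : ∀ (a b : List (ℕ × ℕ)), a.Chain' StepN → b.Chain' StepN →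
    ∀ x1 y1 la lb, a.head? = some x1 → b.head? = some y1 →
    a.getLast? = some la → b.getLast? = some lb →
    x1.2 = y1.1 → la.2 = lb.1 →
    (merge a b).head? = some (x1.1, x1.2, y1.2) ∧
    (merge a b).getLast? = some (la.1, la.2, lb.2) ∧
    (merge a b).Chain' EdgeS ∧
    (∀ v ∈ merge a b, (v.1, v.2.1) ∈ a ∧ (v.2.1, v.2.2) ∈ b) := by
  intro a b
  induction a, b using merge.induct with
  | case1 b => intro _ _ x1 _ _ _ hx; simp at hx
  | case2 a t => intro _ _ _ y1 _ _ _ hy; simp at hy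
  | case3 x y =>
    intro _ _ x1 y1 la lb hx hy hla hlb hmid _
    simp only [List.head?_cons, Option.some_inj] at hx hy
    simp only [List.getLast?_singleton, Option.some_inj] at hla hlb
    subst hx; subst hy; subst hla; subst hlb
    have hM : merge [x] [y] = [(x.1, x.2, y.2)] := by simp [merge]
    rw [hM]
    refine ⟨rfl, rfl, List.isChain_singleton _, ?_⟩
    intro v hv
    simp only [List.mem_singleton] at hv
    subst hv
    exact ⟨by simp, by simp only [List.mem_singleton]; rw [hmid]⟩
  | case4 x y y' ys' ih =>
    intro ha hb x1 y1 la lb hx hy hla hlb hmid hlast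
    simp only [List.head?_cons, Option.some_inj] at hx hy
    simp only [List.getLast?_singleton, Option.some_inj] at hla
    rw [List.getLast?_cons_cons] at hlb
    subst hx; subst hy; subst hla
    rw [List.Chain', List.isChain_cons_cons] at hb
    obtain ⟨⟨s1, s2, s3, s4, s5⟩, hb2⟩ := hb
    have hy'le : y'.1 ≤ lb.1 :=
      (chain'_rel_getLast rle_trans rle_refl (chain_rle hb2) (by simp) hlb).1
    have hy'1 : y'.1 = y.1 := by omega
    have hy'2 : y.2 < y'.2 := by rcases pne s5 with h | h <;> omega
    obtain ⟨rh, rl, rc, rm⟩ := ih ha hb2 x y' x lb rfl rfl rfl hlb (by omega) hlast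
    have hne : merge [x] (y' :: ys') ≠ [] := by
      intro h; rw [h] at rh; simp at rh
    have hM : merge [x] (y :: y' :: ys') = (x.1, x.2, y.2) :: merge [x] (y' :: ys') := by
      simp [merge]
    rw [hM]
    refine ⟨rfl, ?_, ?_, ?_⟩
    · rw [getLast?_cons_of_ne_nil _ hne, rl]
    · rw [List.Chain', List.isChain_cons]
      refine ⟨?_, rc⟩
      intro z hz
      rw [rh] at hz
      simp only [Option.mem_def, Option.some_inj] at hz
      subst hz
      simp only [EdgeS]
      refine ⟨le_rfl, Nat.le_succ _, le_rfl, by omega, by omega, tne (by simp; omega)⟩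
    · intro v hv
      rcases List.mem_cons.1 hv with rfl | hv'
      · exact ⟨by simp, by simp only [List.mem_cons]; left; rw [hmid]⟩
      · obtain ⟨m1, m2⟩ := rm v hv'
        exact ⟨m1, List.mem_cons_of_mem _ m2⟩
  | case5 x x' xs' y ih =>
    intro ha hb x1 y1 la lb hx hy hla hlb hmid hlast
    simp only [List.head?_cons, Option.some_inj] at hx hy
    simp only [List.getLast?_singleton, Option.some_inj] at hlb
    rw [List.getLast?_cons_cons] at hla
    subst hx; subst hy; subst hlb
    rw [List.Chain', List.isChain_cons_cons] at ha
    obtain ⟨⟨s1, s2, s3, s4, s5⟩, ha2⟩ := ha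
    have hx'le : x'.2 ≤ la.2 :=
      (chain'_rel_getLast rle_trans rle_refl (chain_rle ha2) (by simp) hla).2
    have hx'2 : x'.2 = x.2 := by omega
    have hx'1 : x.1 < x'.1 := by rcases pne s5 with h | h <;> omega
    obtain ⟨rh, rl, rc, rm⟩ := ih ha2 hb x' y la y rfl rfl hla rfl (by omega) hlast
    have hne : merge (x' :: xs') [y] ≠ [] := by
      intro h; rw [h] at rh; simp at rh
    have hM : merge (x :: x' :: xs') [y] = (x.1, x.2, y.2) :: merge (x' :: xs') [y] := by
      simp [merge]
    rw [hM]
    refine ⟨rfl, ?_, ?_, ?_⟩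
    · rw [getLast?_cons_of_ne_nil _ hne, rl]
    · rw [List.Chain', List.isChain_cons]
      refine ⟨?_, rc⟩
      intro z hz
      rw [rh] at hz
      simp only [Option.mem_def, Option.some_inj] at hz
      subst hz
      simp only [EdgeS]
      refine ⟨s1, s2, by omega, le_rfl, Nat.le_succ _, tne (by simp; omega)⟩
    · intro v hv
      rcases List.mem_cons.1 hv with rfl | hv'
      · exact ⟨by simp, by simp only [List.mem_singleton]; rw [hmid]⟩
      · obtain ⟨m1, m2⟩ := rm v hv'
        exact ⟨List.mem_cons_of_mem _ m1, m2⟩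
  | case6 x x' xs' y y' ys' heq ih =>
    intro ha hb x1 y1 la lb hx hy hla hlb hmid hlast
    simp only [List.head?_cons, Option.some_inj] at hx hy
    rw [List.getLast?_cons_cons] at hla
    subst hx; subst hy
    rw [List.Chain', List.isChain_cons_cons] at ha
    obtain ⟨⟨s1, s2, s3, s4, s5⟩, ha2⟩ := ha
    have hx'1 : x.1 < x'.1 := by rcases pne s5 with h | h <;> omega
    obtain ⟨rh, rl, rc, rm⟩ := ih ha2 hb x' y la lb rfl rfl hla hlb (by omega) hlast
    have hne : merge (x' :: xs') (y :: y' :: ys') ≠ [] := by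
      intro h; rw [h] at rh; simp at rh
    have hM : merge (x :: x' :: xs') (y :: y' :: ys')
        = (x.1, x.2, y.2) :: merge (x' :: xs') (y :: y' :: ys') := by
      simp [merge, heq]
    rw [hM]
    refine ⟨rfl, ?_, ?_, ?_⟩
    · rw [getLast?_cons_of_ne_nil _ hne, rl]
    · rw [List.Chain', List.isChain_cons]
      refine ⟨?_, rc⟩
      intro z hz
      rw [rh] at hz
      simp only [Option.mem_def, Option.some_inj] at hz
      subst hz
      simp only [EdgeS]
      refine ⟨s1, s2, by omega, le_rfl, Nat.le_succ _, tne (by simp; omega)⟩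
    · intro v hv
      rcases List.mem_cons.1 hv with rfl | hv'
      · exact ⟨by simp, by simp only [List.mem_cons]; left; rw [hmid]⟩
      · obtain ⟨m1, m2⟩ := rm v hv'
        exact ⟨List.mem_cons_of_mem _ m1, m2⟩
  | case7 x x' xs' y y' ys' hneq heq ih =>
    intro ha hb x1 y1 la lb hx hy hla hlb hmid hlast
    simp only [List.head?_cons, Option.some_inj] at hx hy
    rw [List.getLast?_cons_cons] at hlb
    subst hx; subst hy
    rw [List.Chain', List.isChain_cons_cons] at hb
    obtain ⟨⟨s1, s2, s3, s4, s5⟩, hb2⟩ := hb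
    have hy'2 : y.2 < y'.2 := by rcases pne s5 with h | h <;> omega
    obtain ⟨rh, rl, rc, rm⟩ := ih ha hb2 x y' la lb rfl rfl hla hlb (by omega) hlast
    have hne : merge (x :: x' :: xs') (y' :: ys') ≠ [] := by
      intro h; rw [h] at rh; simp at rh
    have hM : merge (x :: x' :: xs') (y :: y' :: ys')
        = (x.1, x.2, y.2) :: merge (x :: x' :: xs') (y' :: ys') := by
      simp [merge, hneq, heq]
    rw [hM]
    refine ⟨rfl, ?_, ?_, ?_⟩
    · rw [getLast?_cons_of_ne_nil _ hne, rl]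
    · rw [List.Chain', List.isChain_cons]
      refine ⟨?_, rc⟩
      intro z hz
      rw [rh] at hz
      simp only [Option.mem_def, Option.some_inj] at hz
      subst hz
      simp only [EdgeS]
      refine ⟨le_rfl, Nat.le_succ _, le_rfl, by omega, by omega, tne (by simp; omega)⟩
    · intro v hv
      rcases List.mem_cons.1 hv with rfl | hv'
      · exact ⟨by simp, by simp only [List.mem_cons]; left; rw [hmid]⟩
      · obtain ⟨m1, m2⟩ := rm v hv'
        exact ⟨m1, List.mem_cons_of_mem _ m2⟩
  | case8 x x' xs' y y' ys' hneqx hneqy ih =>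
    intro ha hb x1 y1 la lb hx hy hla hlb hmid hlast
    simp only [List.head?_cons, Option.some_inj] at hx hy
    rw [List.getLast?_cons_cons] at hla hlb
    subst hx; subst hy
    rw [List.Chain', List.isChain_cons_cons] at ha hb
    obtain ⟨⟨a1, a2, a3, a4, a5⟩, ha2⟩ := ha
    obtain ⟨⟨b1, b2, b3, b4, b5⟩, hb2⟩ := hb
    have hx'2 : x'.2 = x.2 + 1 := by omega
    have hy'1 : y'.1 = y.1 + 1 := by omega
    obtain ⟨rh, rl, rc, rm⟩ := ih ha2 hb2 x' y' la lb rfl rfl hla hlb (by omega) hlast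
    have hne : merge (x' :: xs') (y' :: ys') ≠ [] := by
      intro h; rw [h] at rh; simp at rh
    have hM : merge (x :: x' :: xs') (y :: y' :: ys')
        = (x.1, x.2, y.2) :: merge (x' :: xs') (y' :: ys') := by
      simp [merge, hneqx, hneqy]
    rw [hM]
    refine ⟨rfl, ?_, ?_, ?_⟩
    · rw [getLast?_cons_of_ne_nil _ hne, rl]
    · rw [List.Chain', List.isChain_cons]
      refine ⟨?_, rc⟩
      intro z hz
      rw [rh] at hz
      simp only [Option.mem_def, Option.some_inj] at hz
      subst hz
      simp only [EdgeS]
      refine ⟨a1, a2, by omega, b3, b4, tne (by simp; omega)⟩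
    · intro v hv
      rcases List.mem_cons.1 hv with rfl | hv'
      · exact ⟨by simp, by simp only [List.mem_cons]; left; rw [hmid]⟩
      · obtain ⟨m1, m2⟩ := rm v hv'
        exact ⟨List.mem_cons_of_mem _ m1, List.mem_cons_of_mem _ m2⟩

lemma getLast?_cons_of_ne_nil' {α : Type*} (x : α) {l : List α} (h : l ≠ []) :
    (x :: l).getLast? = l.getLast? := by
  cases l with
  | nil => exact absurd rfl h
  | cons a t => rw [List.getLast?_cons_cons]

/- ---------- dcons ---------- -/

def dcons (a : ℕ × ℕ) (l : List (ℕ × ℕ)) : List (ℕ × ℕ) :=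
  if l.head? = some a then l else a :: l

lemma dcons_head (a : ℕ × ℕ) (l : List (ℕ × ℕ)) : (dcons a l).head? = some a := by
  unfold dcons
  split
  · assumption
  · rfl

lemma dcons_last {a : ℕ × ℕ} {l : List (ℕ × ℕ)} (h : l ≠ []) :
    (dcons a l).getLast? = l.getLast? := by
  unfold dcons
  split
  · rfl
  · exact getLast?_cons_of_ne_nil' _ h

lemma dcons_chain {a : ℕ × ℕ} {l : List (ℕ × ℕ)} (hl : l.Chain' StepN)
    (h : ∀ b, l.head? = some b → b ≠ a → StepN a b) : (dcons a l).Chain' StepN := by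
  unfold dcons
  split
  · exact hl
  · next hne =>
    rw [List.Chain', List.isChain_cons]
    refine ⟨?_, hl⟩
    intro b hb
    simp only [Option.mem_def] at hb
    refine h b hb ?_
    intro hba
    exact hne (by rw [hb, hba])

lemma dcons_mem {a e : ℕ × ℕ} {l : List (ℕ × ℕ)} (h : e ∈ dcons a l) : e = a ∨ e ∈ l := by
  unfold dcons at h
  split at h
  · exact Or.inr h
  · rcases List.mem_cons.1 h with h | h
    · exact Or.inl h
    · exact Or.inr h

lemma getD_zero_of_head? {l : List ℕ} {x : ℕ} (h : l.head? = some x) : l.getD 0 0 = x := by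
  cases l with
  | nil => simp at h
  | cons a t => simp at h; simp [h]

/- ---------- build ---------- -/

def shiftA (l : List (ℕ × ℕ)) : List (ℕ × ℕ) := l.map (fun e => (e.1, e.2 + 1))
def shiftB (l : List (ℕ × ℕ)) : List (ℕ × ℕ) := l.map (fun e => (e.1 + 1, e.2))

def build : ℕ × ℕ × ℕ → List (ℕ × ℕ × ℕ) → List ℕ × List (ℕ × ℕ) × List (ℕ × ℕ)
  | v, [] => ([v.2.1], [(v.1 - 1, 0)], [(0, v.2.2 - 1)])
  | v, w :: ws =>
    if v.2.1 < w.2.1 then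
      (v.2.1 :: (build w ws).1, dcons (v.1 - 1, 0) (shiftA (build w ws).2.1),
        dcons (0, v.2.2 - 1) (shiftB (build w ws).2.2))
    else
      ((build w ws).1, dcons (v.1 - 1, 0) (build w ws).2.1,
        dcons (0, v.2.2 - 1) (build w ws).2.2)

lemma buildSpec {X : Type*} [MetricSpace X] [Inhabited X] (A B : List X) (δ1 δ3 : ℝ) :
    ∀ (ws : List (ℕ × ℕ × ℕ)) (v : ℕ × ℕ × ℕ),
    (v :: ws).Chain' (Edge3 A B δ1 δ3) →
    (∀ u ∈ v :: ws, Ok3 A B δ1 δ3 u) →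
    ∀ lv, (v :: ws).getLast? = some lv →
    (build v ws).1 ≠ [] ∧
    (build v ws).1.head? = some v.2.1 ∧
    (build v ws).1.Chain' (· < ·) ∧
    (∀ p ∈ (build v ws).1, ∃ u ∈ v :: ws, u.2.1 = p) ∧
    (build v ws).1.length = ((v :: ws).zip ws).countP (fun e => decide (e.1.2.1 < e.2.2.1)) + 1 ∧
    (build v ws).2.1.head? = some (v.1 - 1, 0) ∧
    (build v ws).2.1.getLast? = some (lv.1 - 1, (build v ws).1.length - 1) ∧
    (build v ws).2.1.Chain' StepN ∧
    (∀ e ∈ (build v ws).2.1, e.2 < (build v ws).1.length ∧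
      dist (A.getD e.1 default) (A.getD ((build v ws).1.getD e.2 0 - 1) default) ≤ δ1) ∧
    (build v ws).2.2.head? = some (0, v.2.2 - 1) ∧
    (build v ws).2.2.getLast? = some ((build v ws).1.length - 1, lv.2.2 - 1) ∧
    (build v ws).2.2.Chain' StepN ∧
    (∀ e ∈ (build v ws).2.2, e.1 < (build v ws).1.length ∧
      dist (A.getD ((build v ws).1.getD e.1 0 - 1) default) (B.getD e.2 default) ≤ δ3) := by
  intro ws
  induction ws with
  | nil =>
    intro v _ hall lv hlv
    simp only [List.getLast?_singleton, Option.some_inj] at hlv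
    subst hlv
    obtain ⟨o1, o2, o3, o4, o5, o6, o7, o8⟩ := hall v (by simp)
    refine ⟨by simp [build], by simp [build], by simp [build, List.Chain'], ?_, by simp [build], ?_, ?_, ?_, ?_, ?_, ?_, ?_, ?_⟩
    · intro p hp
      simp only [build, List.mem_singleton] at hp
      exact ⟨v, by simp, hp.symm⟩
    · simp [build]
    · simp [build]
    · simp [build, List.Chain']
    · intro e he
      simp only [build, List.mem_singleton] at he
      subst he
      exact ⟨by simp [build], by simpa [build] using o7⟩
    · simp [build]
    · simp [build]
    · simp [build, List.Chain']
    · intro e he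
      simp only [build, List.mem_singleton] at he
      subst he
      exact ⟨by simp [build], by simpa [build] using o8⟩
  | cons w ws' ih =>
    intro v hc hall lv hlv
    rw [List.getLast?_cons_cons] at hlv
    rw [List.Chain', List.isChain_cons_cons] at hc
    obtain ⟨hvw, hc2⟩ := hc
    obtain ⟨hOv, hOw, e1, e2, e3, e4, e5, hne⟩ := hvw
    obtain ⟨ov1, ov2, ov3, ov4, ov5, ov6, ov7, ov8⟩ := hOv
    obtain ⟨q0, q1, q2, q3, q4, x1, x2, x3, x4, y1, y2, y3, y4⟩ :=
      ih w hc2 (fun u hu => hall u (List.mem_cons_of_mem _ hu)) lv hlv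
    have hzip : ((v :: w :: ws').zip (w :: ws')).countP (fun e => decide (e.1.2.1 < e.2.2.1))
        = (((w :: ws').zip ws').countP (fun e => decide (e.1.2.1 < e.2.2.1)))
          + (if v.2.1 < w.2.1 then 1 else 0) := by
      rw [List.zip_cons_cons, List.countP_cons]
      by_cases h : v.2.1 < w.2.1 <;> simp [h]
    have hq0' : (build w ws').1.length ≥ 1 := List.length_pos_iff.2 q0
    by_cases hlt : v.2.1 < w.2.1
    · have hB : build v (w :: ws') =
          (v.2.1 :: (build w ws').1, dcons (v.1 - 1, 0) (shiftA (build w ws').2.1),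
           dcons (0, v.2.2 - 1) (shiftB (build w ws').2.2)) := by
        simp [build, hlt]
      rw [hB]
      dsimp only
      have hxne : shiftA (build w ws').2.1 ≠ [] := by
        intro h
        unfold shiftA at h
        rw [List.map_eq_nil_iff] at h
        rw [h] at x1; simp at x1
      have hyne : shiftB (build w ws').2.2 ≠ [] := by
        intro h
        unfold shiftB at h
        rw [List.map_eq_nil_iff] at h
        rw [h] at y1; simp at y1
      have hxh : (shiftA (build w ws').2.1).head? = some (w.1 - 1, 1) := by
        unfold shiftA
        rw [List.head?_map, x1]
        rfl
      have hyh : (shiftB (build w ws').2.2).head? = some (1, w.2.2 - 1) := by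
        unfold shiftB
        rw [List.head?_map, y1]
        rfl
      have hxd : dcons (v.1 - 1, 0) (shiftA (build w ws').2.1)
          = (v.1 - 1, 0) :: shiftA (build w ws').2.1 := by
        unfold dcons
        rw [if_neg]
        rw [hxh]
        simp
      have hyd : dcons (0, v.2.2 - 1) (shiftB (build w ws').2.2)
          = (0, v.2.2 - 1) :: shiftB (build w ws').2.2 := by
        unfold dcons
        rw [if_neg]
        rw [hyh]
        simp
      refine ⟨by simp, by simp, ?_, ?_, ?_, ?_, ?_, ?_, ?_, ?_, ?_, ?_, ?_⟩
      · rw [List.Chain', List.isChain_cons]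
        refine ⟨?_, q2⟩
        intro b hb
        rw [q1] at hb
        simp only [Option.mem_def, Option.some_inj] at hb
        subst hb
        exact hlt
      · intro p hp
        rcases List.mem_cons.1 hp with rfl | hp'
        · exact ⟨v, by simp, rfl⟩
        · obtain ⟨u, hu, hup⟩ := q3 p hp'
          exact ⟨u, List.mem_cons_of_mem _ hu, hup⟩
      · simp only [List.length_cons, hzip, if_pos hlt, q4]
      · simp [hxd]
      · rw [hxd, getLast?_cons_of_ne_nil' _ hxne]
        unfold shiftA
        rw [List.getLast?_map, x2]
        simp only [Option.map_some, Option.some_inj, Prod.mk.injEq]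
        refine ⟨trivial, ?_⟩
        simp
        omega
      · rw [hxd, List.Chain', List.isChain_cons]
        constructor
        · intro b hb
          rw [hxh] at hb
          simp only [Option.mem_def, Option.some_inj] at hb
          subst hb
          refine ⟨by omega, by omega, by omega, by omega, ?_⟩
          intro h
          have := congrArg (fun t : ℕ × ℕ => t.2) h
          simp at this
        · unfold shiftA
          rw [List.isChain_map]
          refine x3.imp ?_
          rintro ⟨a1, a2⟩ ⟨b1, b2⟩ ⟨s1, s2, s3, s4, s5⟩
          refine ⟨s1, s2, by omega, by omega, ?_⟩
          intro h
          simp only [Prod.mk.injEq] at h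
          exact s5 (Prod.ext h.1 (by omega))
      · intro e he
        rw [hxd] at he
        rcases List.mem_cons.1 he with rfl | he'
        · refine ⟨by simp, ?_⟩
          simpa using ov7
        · unfold shiftA at he'
          rcases List.mem_map.1 he' with ⟨e0, he0, rfl⟩
          obtain ⟨hb1, hb2⟩ := x4 e0 he0
          refine ⟨by simp; omega, ?_⟩
          simpa [List.getD_cons_succ] using hb2
      · simp [hyd]
      · rw [hyd, getLast?_cons_of_ne_nil' _ hyne]
        unfold shiftB
        rw [List.getLast?_map, y2]
        simp only [Option.map_some, Option.some_inj, Prod.mk.injEq]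
        refine ⟨?_, trivial⟩
        simp
        omega
      · rw [hyd, List.Chain', List.isChain_cons]
        constructor
        · intro b hb
          rw [hyh] at hb
          simp only [Option.mem_def, Option.some_inj] at hb
          subst hb
          refine ⟨by omega, by omega, by omega, by omega, ?_⟩
          intro h
          have := congrArg (fun t : ℕ × ℕ => t.1) h
          simp at this
        · unfold shiftB
          rw [List.isChain_map]
          refine y3.imp ?_
          rintro ⟨a1, a2⟩ ⟨b1, b2⟩ ⟨s1, s2, s3, s4, s5⟩
          refine ⟨by omega, by omega, s3, s4, ?_⟩
          intro h
          simp only [Prod.mk.injEq] at h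
          exact s5 (Prod.ext (by omega) h.2)
      · intro e he
        rw [hyd] at he
        rcases List.mem_cons.1 he with rfl | he'
        · refine ⟨by simp, ?_⟩
          simpa using ov8
        · unfold shiftB at he'
          rcases List.mem_map.1 he' with ⟨e0, he0, rfl⟩
          obtain ⟨hb1, hb2⟩ := y4 e0 he0
          refine ⟨by simp; omega, ?_⟩
          simpa [List.getD_cons_succ] using hb2
    · have heq : v.2.1 = w.2.1 := by omega
      have hB : build v (w :: ws') =
          ((build w ws').1, dcons (v.1 - 1, 0) (build w ws').2.1,
           dcons (0, v.2.2 - 1) (build w ws').2.2) := by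
        simp [build, hlt]
      rw [hB]
      dsimp only
      have hxne : (build w ws').2.1 ≠ [] := by
        intro h; rw [h] at x1; simp at x1
      have hyne : (build w ws').2.2 ≠ [] := by
        intro h; rw [h] at y1; simp at y1
      refine ⟨q0, by rw [q1, heq], q2, ?_, ?_, ?_, ?_, ?_, ?_, ?_, ?_, ?_, ?_⟩
      · intro p hp
        obtain ⟨u, hu, hup⟩ := q3 p hp
        exact ⟨u, List.mem_cons_of_mem _ hu, hup⟩
      · rw [hzip, if_neg hlt]
        omega
      · exact dcons_head _ _
      · rw [dcons_last hxne, x2]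
      · refine dcons_chain x3 ?_
        intro b hb hbne
        rw [x1] at hb
        simp only [Option.mem_def, Option.some_inj] at hb
        subst hb
        refine ⟨by omega, by omega, le_rfl, by omega, fun h => hbne (by rw [h])⟩
      · intro e he
        rcases dcons_mem he with rfl | he'
        · refine ⟨by omega, ?_⟩
          rw [getD_zero_of_head? (l := (build w ws').1) (x := v.2.1) (by rw [q1, heq])]
          simpa [heq] using ov7
        · exact x4 e he'
      · exact dcons_head _ _
      · rw [dcons_last hyne, y2]
      · refine dcons_chain y3 ?_
        intro b hb hbne
        rw [y1] at hb
        simp only [Option.mem_def, Option.some_inj] at hb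
        subst hb
        refine ⟨le_rfl, by omega, by omega, by omega, fun h => hbne (by rw [h])⟩
      · intro e he
        rcases dcons_mem he with rfl | he'
        · refine ⟨by omega, ?_⟩
          rw [getD_zero_of_head? (l := (build w ws').1) (x := v.2.1) (by rw [q1, heq])]
          simpa [heq] using ov8
        · exact y4 e he'




lemma tprojne {v w : ℕ × ℕ × ℕ} (h : v ≠ w) :
    v.1 ≠ w.1 ∨ v.2.1 ≠ w.2.1 ∨ v.2.2 ≠ w.2.2 := by
  by_contra h'
  push_neg at h'
  exact h (Prod.ext h'.1 (Prod.ext h'.2.1 h'.2.2))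

/-- Correctness of the 1-sided CPS-3F graph formulation: a simplification `A'`
of `A` with at most `k` vertices, `d_dF(A,A') ≤ δ1` and `d_dF(A',B) ≤ δ3`
exists iff some final configuration `(m,p₁,n)` is reachable from some starting
configuration `(1,p₀,1)` by a path whose second coordinate strictly increases
at most `k-1` times. -/
theorem one_sided_cps3f_graph_correct {X : Type*} [MetricSpace X] [Inhabited X]
    (A B : List X) (hA : A ≠ []) (hB : B ≠ [])
    (δ1 δ3 : ℝ) (h1 : 0 < δ1) (h3 : 0 < δ3) (k : ℕ) (hk : 1 ≤ k) :
    (∃ A' : List X, A'.Sublist A ∧ A' ≠ [] ∧ A'.length ≤ k ∧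
      dFL A A' ≤ δ1 ∧ dFL A' B ≤ δ3) ↔
    (∃ p₀ p₁ : ℕ, ∃ c : List (ℕ × ℕ × ℕ),
      c.head? = some (1, p₀, 1) ∧
      c.getLast? = some (A.length, p₁, B.length) ∧
      c.Chain' (Edge3 A B δ1 δ3) ∧
      (∀ v ∈ c, Ok3 A B δ1 δ3 v) ∧
      (c.zip c.tail).countP (fun e => decide (e.1.2.1 < e.2.2.1)) ≤ k - 1) := by
  have hAlen : 1 ≤ A.length := List.length_pos_iff.2 hA
  have hBlen : 1 ≤ B.length := List.length_pos_iff.2 hB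
  constructor
  · -- forward direction
    rintro ⟨A', hsub, hne', hlen, hd1, hd3⟩
    obtain ⟨c1, ⟨hc1h, hc1l, hc1c⟩, hb1⟩ := exists_coupling_of_dFL_le hd1
    obtain ⟨c2, ⟨hc2h, hc2l, hc2c⟩, hb2⟩ := exists_coupling_of_dFL_le hd3
    obtain ⟨is, hisA, hisP⟩ := List.sublist_eq_map_getElem hsub
    have hK1 : 1 ≤ A'.length := List.length_pos_iff.2 hne'
    have hisLen : is.length = A'.length := by rw [hisA, List.length_map]
    set σ : ℕ → ℕ :=
      fun p => if h : p < is.length then (is.get ⟨p, h⟩ : Fin A.length).val else 0 with hσdef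
    have hσval : ∀ p (h : p < is.length), σ p = (is.get ⟨p, h⟩).val := fun p h => dif_pos h
    have hσlt : ∀ p, p < A'.length → σ p < A.length := by
      intro p hp
      have hp' : p < is.length := by omega
      rw [hσval p hp']
      exact (is.get ⟨p, hp'⟩).isLt
    have hσmono : ∀ p q, p < q → q < A'.length → σ p < σ q := by
      intro p q hpq hq
      have hp' : p < is.length := by omega
      have hq' : q < is.length := by omega
      rw [hσval p hp', hσval q hq']
      exact List.pairwise_iff_get.1 hisP ⟨p, hp'⟩ ⟨q, hq'⟩ (Fin.mk_lt_mk.2 hpq)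
    have hσle : ∀ p q, p ≤ q → q < A'.length → σ p ≤ σ q := by
      intro p q hpq hq
      rcases eq_or_lt_of_le hpq with rfl | h
      · exact le_rfl
      · exact le_of_lt (hσmono _ _ h hq)
    have hA'getD : ∀ p, p < A'.length → A'.getD p default = A.getD (σ p) default := by
      intro p hp
      have hp' : p < is.length := by omega
      rw [hσval p hp']
      conv_lhs => rw [hisA]
      rw [List.getD_eq_getElem _ _ (by simpa using hp'), List.getElem_map,
        List.getD_eq_getElem _ _ (is.get ⟨p, hp'⟩).isLt]
      simp [List.get_eq_getElem]
    obtain ⟨mh, ml, mc, mm⟩ := mergeSpec c1 c2 hc1c hc2c (0, 0) (0, 0)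
      (A.length - 1, A'.length - 1) (A'.length - 1, B.length - 1)
      hc1h hc2h hc1l hc2l rfl rfl
    have hrange : ∀ v ∈ merge c1 c2,
        v.1 ≤ A.length - 1 ∧ v.2.1 ≤ A'.length - 1 ∧ v.2.2 ≤ B.length - 1 := by
      intro v hv
      obtain ⟨m1, m2⟩ := mm v hv
      have r1 := chain'_rel_getLast rle_trans rle_refl (chain_rle hc1c) m1 hc1l
      have r2 := chain'_rel_getLast rle_trans rle_refl (chain_rle hc2c) m2 hc2l
      exact ⟨r1.1, r1.2, r2.2⟩
    set f : ℕ × ℕ × ℕ → ℕ × ℕ × ℕ := fun v => (v.1 + 1, σ v.2.1 + 1, v.2.2 + 1) with hf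
    have hOk : ∀ v ∈ merge c1 c2, Ok3 A B δ1 δ3 (f v) := by
      intro v hv
      obtain ⟨m1, m2⟩ := mm v hv
      obtain ⟨r1, r2, r3⟩ := hrange v hv
      have hp : v.2.1 < A'.length := by omega
      have hσl := hσlt v.2.1 hp
      refine ⟨by simp [hf], by simp [hf]; omega, by simp [hf], by simp [hf]; omega,
        by simp [hf], by simp [hf]; omega, ?_, ?_⟩
      · have hd := hb1 (v.1, v.2.1) m1
        rw [hA'getD v.2.1 hp] at hd
        simpa [hf, Nat.add_sub_cancel] using hd
      · have hd := hb2 (v.2.1, v.2.2) m2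
        rw [hA'getD v.2.1 hp] at hd
        simpa [hf, Nat.add_sub_cancel] using hd
    refine ⟨σ 0 + 1, σ (A'.length - 1) + 1, (merge c1 c2).map f, ?_, ?_, ?_, ?_, ?_⟩
    · rw [List.head?_map, mh]
      simp [hf]
    · rw [List.getLast?_map, ml]
      simp only [hf, Option.map_some, Option.some_inj, Prod.mk.injEq]
      exact ⟨by omega, trivial, by omega⟩
    · rw [List.Chain', List.isChain_map]
      refine chain'_of_chain'_mem mc ?_
      intro a ha b hb hEdge
      obtain ⟨g1, g2, g3, g4, g5, g6⟩ := hEdge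
      have hbp : b.2.1 < A'.length := by have := (hrange b hb).2.1; omega
      refine ⟨hOk a ha, hOk b hb, by simp [hf]; omega, by simp [hf]; omega,
        by simp only [hf]; exact Nat.succ_le_succ (hσle _ _ g3 hbp),
        by simp [hf]; omega, by simp [hf]; omega, ?_⟩
      by_cases hmid : a.2.1 = b.2.1
      · refine tne ?_
        simp only [hf]
        rcases tprojne g6 with h | h | h
        · exact Or.inl (by omega)
        · exact absurd hmid h
        · exact Or.inr (Or.inr (by omega))
      · have hlt' : a.2.1 < b.2.1 := lt_of_le_of_ne g3 hmid
        refine tne (Or.inr (Or.inl ?_))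
        simp only [hf]
        have := hσmono _ _ hlt' hbp
        omega
    · intro u hu
      rcases List.mem_map.1 hu with ⟨v, hv, rfl⟩
      exact hOk v hv
    · rw [← List.map_tail, List.zip_map, List.countP_map]
      have hstep1 : ((merge c1 c2).zip (merge c1 c2).tail).countP
            ((fun e => decide (e.1.2.1 < e.2.2.1)) ∘ Prod.map f f)
          ≤ ((merge c1 c2).zip (merge c1 c2).tail).countP
            (fun e => decide (e.1.2.1 < e.2.2.1)) := by
        refine List.countP_mono_left ?_
        rintro ⟨u, w⟩ he h
        have hu : u ∈ merge c1 c2 := (List.of_mem_zip he).1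
        have hup : u.2.1 < A'.length := by have := (hrange u hu).2.1; omega
        simp only [Function.comp_apply, Prod.map_apply, hf, decide_eq_true_eq] at h ⊢
        by_contra hcon
        push_neg at hcon
        have := hσle _ _ hcon hup
        omega
      refine le_trans hstep1 ?_
      obtain ⟨t, hM⟩ : ∃ t, merge c1 c2 = ((0 : ℕ), (0 : ℕ), (0 : ℕ)) :: t := by
        cases hMc : merge c1 c2 with
        | nil => rw [hMc] at mh; simp at mh
        | cons h0 t =>
          rw [hMc] at mh
          simp only [List.head?_cons, Option.some_inj] at mh
          exact ⟨t, by rw [mh]⟩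
      rw [hM]
      have hmidchain : List.Chain' (fun a b : ℕ × ℕ × ℕ => a.2.1 ≤ b.2.1)
          (((0 : ℕ), (0 : ℕ), (0 : ℕ)) :: t) := by
        rw [← hM]
        exact mc.imp (fun _ _ s => s.2.2.1)
      have hlast' : ((((0 : ℕ), (0 : ℕ), (0 : ℕ)) :: t)).getLast?
          = some (A.length - 1, A'.length - 1, B.length - 1) := by
        rw [← hM]; exact ml
      have hcnt := countP_mid_le t ((0 : ℕ), (0 : ℕ), (0 : ℕ))
        (A.length - 1, A'.length - 1, B.length - 1) hmidchain hlast'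
      simp only [List.tail_cons]
      dsimp only at hcnt
      omega
  · -- reverse direction
    rintro ⟨p₀, p₁, c, hh, hl, hcc, hok, hcount⟩
    cases c with
    | nil => simp at hh
    | cons v ws =>
    simp only [List.head?_cons, Option.some_inj] at hh
    subst hh
    obtain ⟨q0, q1, q2, q3, q4, x1, x2, x3, x4, y1, y2, y3, y4⟩ :=
      buildSpec A B δ1 δ3 ws (1, p₀, 1) hcc hok (A.length, p₁, B.length) hl
    set qs := (build (1, p₀, 1) ws).1 with hqs
    set A' : List X := qs.map (fun p => A.getD (p - 1) default) with hA'
    have hqmem : ∀ p ∈ qs, 1 ≤ p ∧ p ≤ A.length := by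
      intro p hp
      obtain ⟨u, hu, rfl⟩ := q3 p hp
      obtain ⟨_, _, o3, o4, _⟩ := hok u hu
      exact ⟨o3, o4⟩
    have hA'len : A'.length = qs.length := by rw [hA', List.length_map]
    have hA'getD : ∀ b, b < qs.length →
        A'.getD b default = A.getD (qs.getD b 0 - 1) default := by
      intro b hb
      rw [hA', List.getD_eq_getElem _ _ (by simpa using hb), List.getElem_map,
        List.getD_eq_getElem _ _ hb]
    refine ⟨A', ?_, ?_, ?_, ?_, ?_⟩
    · -- sublist
      have hjs_chain : (qs.map (· - 1)).Chain' (· < ·) := by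
        rw [List.Chain', List.isChain_map]
        refine chain'_of_chain'_mem q2 ?_
        intro a ha b hb hab
        have := (hqmem a ha).1
        show a - 1 < b - 1
        omega
      have hjs_bound : ∀ i ∈ qs.map (· - 1), i < A.length := by
        intro i hi
        rcases List.mem_map.1 hi with ⟨p, hp, rfl⟩
        have := hqmem p hp
        omega
      have hs := map_getD_sublist A (qs.map (· - 1)) hjs_chain hjs_bound
      rwa [List.map_map] at hs
    · simpa [hA'] using q0
    · rw [hA'len, q4]
      simp only [List.tail_cons] at hcount
      omega
    · -- dFL A A' ≤ δ1
      refine dFL_le h1.le ⟨?_, ?_, x3⟩ ?_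
      · simpa using x1
      · rw [hA'len]
        simpa using x2
      · intro e he
        obtain ⟨hb1, hb2⟩ := x4 e he
        rw [hA'getD e.2 hb1]
        exact hb2
    · -- dFL A' B ≤ δ3
      refine dFL_le h3.le ⟨?_, ?_, y3⟩ ?_
      · simpa using y1
      · rw [hA'len]
        simpa using y2
      · intro e he
        obtain ⟨hb1, hb2⟩ := y4 e he
        rw [hA'getD e.1 hb1]
        exact hb2
end

section
/- (Optimal substructure used in Theorem 5: dropping a middle dominance.) Let A, B be chains and δ > 0, and let O[i,j] and X[i,j] be as in the minimum-length one-sided simplification DP. Then X[i+1, j+1] ≤ X[i+1, j] for all valid i, j; that is, any simplification of a suffix of A that matches B[j..n] within δ also yields (after the coupling advances in B) a matching of B[j+1..n], so the option of advancing only in A may be disregarded in the recurrence. -/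
/-- `OVal A B δ i j` (1-based `i`, `j`): the minimum length of a subsequence of
the suffix `A[i..m]` beginning at `a_i` whose discrete Fréchet distance to the
suffix `B[j..n]` is at most `δ` (and `⊤` if none exists). -/
noncomputable def OVal {X : Type*} [MetricSpace X] [Inhabited X]
    (A B : List X) (δ : ℝ) (i j : ℕ) : ℕ∞ :=
  sInf {z : ℕ∞ | ∃ S : List X,
    S.Sublist (A.drop (i - 1)) ∧ S ≠ [] ∧ S.head? = (A.drop (i - 1)).head? ∧
    dFL S (B.drop (j - 1)) ≤ δ ∧ z = (S.length : ℕ∞)}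

/-- `XVal A B δ i j = min_{i' ≥ i} OVal A B δ i' j` (with `i'` ranging over
`i, ..., m`). -/
noncomputable def XVal {X : Type*} [MetricSpace X] [Inhabited X]
    (A B : List X) (δ : ℝ) (i j : ℕ) : ℕ∞ :=
  (Finset.Icc i A.length).inf (fun i' => OVal A B δ i' j)

lemma foldr_max_sublist {l₁ l₂ : List ℝ} (h : l₁.Sublist l₂) :
    l₁.foldr max 0 ≤ l₂.foldr max 0 := by
  induction h with
  | slnil => exact le_rfl
  | cons a h ih => exact le_trans ih (le_max_right _ _)
  | cons_cons a h ih => exact max_le_max le_rfl ih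

lemma chain'_head_le : ∀ {c : List (ℕ × ℕ)}, c.Chain' StepN → ∀ {a}, c.head? = some a →
    ∀ p ∈ c, a.1 ≤ p.1 ∧ a.2 ≤ p.2
  | [], _, _, ha, p, hp => by simp at ha
  | [x], _, a, ha, p, hp => by
      simp at ha hp; subst ha; subst hp; exact ⟨le_rfl, le_rfl⟩
  | x :: y :: t, h, a, ha, p, hp => by
      simp only [List.Chain'] at h
      rw [List.isChain_cons_cons] at h
      simp only [List.head?_cons, Option.some.injEq] at ha
      subst ha
      rcases List.mem_cons.1 hp with rfl | hp
      · exact ⟨le_rfl, le_rfl⟩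
      · have := chain'_head_le h.2 (a := y) rfl p hp
        exact ⟨le_trans h.1.1 this.1, le_trans h.1.2.2.1 this.2⟩

lemma chain'_le_last : ∀ {c : List (ℕ × ℕ)}, c.Chain' StepN → ∀ {a}, c.getLast? = some a →
    ∀ p ∈ c, p.1 ≤ a.1 ∧ p.2 ≤ a.2
  | [], _, _, ha, p, hp => by simp at ha
  | [x], _, a, ha, p, hp => by
      simp at ha hp; subst ha; subst hp; exact ⟨le_rfl, le_rfl⟩
  | x :: y :: t, h, a, ha, p, hp => by
      simp only [List.Chain'] at h
      rw [List.isChain_cons_cons] at h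
      have ha' : (y :: t).getLast? = some a := by
        rw [← ha]; simp [List.getLast?_cons_cons]
      rcases List.mem_cons.1 hp with rfl | hp
      · have := chain'_le_last h.2 ha' y (by simp)
        exact ⟨le_trans h.1.1 this.1, le_trans h.1.2.2.1 this.2⟩
      · exact chain'_le_last h.2 ha' p hp

lemma chain'_imp_mem {α : Type*} {R S : α → α → Prop} :
    ∀ {l : List α}, l.Chain' R → (∀ a ∈ l, ∀ b ∈ l, R a b → S a b) → l.Chain' S
  | [], _, _ => List.isChain_nil
  | [x], _, _ => List.isChain_singleton x
  | x :: y :: t, h, hm => by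
      simp only [List.Chain'] at h ⊢
      rw [List.isChain_cons_cons] at h ⊢
      exact ⟨hm x (by simp) y (by simp) h.1,
        chain'_imp_mem h.2 (fun a ha b hb hr => hm a (List.mem_cons_of_mem _ ha) b (List.mem_cons_of_mem _ hb) hr)⟩

lemma chain'_range' {r : ℕ → ℕ → Prop} (h : ∀ m, r m (m + 1)) :
    ∀ (n s : ℕ), List.Chain' r (List.range' s n)
  | 0, s => List.isChain_nil
  | 1, s => List.isChain_singleton s
  | (n+2), s => by
      simp only [List.Chain']
      rw [List.range'_succ, List.isChain_cons]
      refine ⟨?_, chain'_range' h (n+1) (s+1)⟩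
      intro b hb
      rw [List.range'_succ] at hb
      simp at hb
      subst hb
      exact h s

lemma exists_coupling (la lb : ℕ) (hla : 1 ≤ la) (hlb : 1 ≤ lb) :
    ∃ c, IsCouplingL la lb c := by
  refine ⟨(List.range' 0 la).map (fun a => (a, 0)) ++
    (List.range' 1 (lb-1)).map (fun b => (la - 1, b)), ?_, ?_, ?_⟩
  · obtain ⟨la', rfl⟩ : ∃ la', la = la' + 1 := ⟨la - 1, by omega⟩
    rw [List.range'_succ]
    simp
  · rcases Nat.lt_or_ge lb 2 with h2 | h2
    · interval_cases lb
      obtain ⟨la', rfl⟩ : ∃ la', la = la' + 1 := ⟨la - 1, by omega⟩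
      rw [List.range'_concat]
      simp [List.getLast?_append]
    · obtain ⟨lb', rfl⟩ : ∃ lb', lb = lb' + 2 := ⟨lb - 2, by omega⟩
      rw [show lb' + 2 - 1 = lb' + 1 from rfl, List.range'_concat]
      simp [List.getLast?_append]
      omega
  · simp only [List.Chain']
    rw [List.isChain_append]
    refine ⟨?_, ?_, ?_⟩
    · rw [List.isChain_map]
      exact chain'_range' (fun m => by simp [StepN]) la 0
    · rw [List.isChain_map]
      exact chain'_range' (fun m => by simp [StepN]) (lb-1) 1
    · intro x hx y hy
      obtain ⟨la', rfl⟩ : ∃ la', la = la' + 1 := ⟨la - 1, by omega⟩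
      rw [List.range'_concat] at hx
      simp [List.getLast?_append] at hx
      rcases Nat.eq_or_lt_of_le hlb with h1 | h2
      · rw [← h1] at hy; simp at hy
      · obtain ⟨lb', rfl⟩ : ∃ lb', lb = lb' + 2 := ⟨lb - 2, by omega⟩
        rw [show lb' + 2 - 1 = lb' + 1 from rfl, List.range'_succ] at hy
        simp at hy
        subst hx; subst hy
        simp [StepN]

lemma coupling_length_le {la lb : ℕ} {c : List (ℕ × ℕ)} (h : IsCouplingL la lb c) :
    c.length ≤ la + lb + 1 := by
  obtain ⟨hh, hl, hc⟩ := h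
  have hchain : List.Chain' (· < ·) (c.map (fun p => p.1 + p.2)) := by
    simp only [List.Chain']
    rw [List.isChain_map]
    refine hc.imp ?_
    rintro ⟨p1, p2⟩ ⟨q1, q2⟩ hs
    obtain ⟨h1, h2, h3, h4, h5⟩ := hs
    simp only [ne_eq, Prod.mk.injEq, not_and] at h5
    simp only at h1 h2 h3 h4 ⊢
    omega
  have hnd : (c.map (fun p => p.1 + p.2)).Nodup :=
    (List.isChain_iff_pairwise.1 hchain).imp (fun h => Nat.ne_of_lt h)
  have hsub : (c.map (fun p => p.1 + p.2)).toFinset ⊆ Finset.range (la + lb + 1) := by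
    intro x hx
    rw [List.mem_toFinset, List.mem_map] at hx
    obtain ⟨p, hp, rfl⟩ := hx
    have := chain'_le_last hc hl p hp
    rw [Finset.mem_range]
    omega
  calc c.length = (c.map (fun p => p.1 + p.2)).toFinset.card := by
        rw [List.toFinset_card_of_nodup hnd, List.length_map]
    _ ≤ (Finset.range (la + lb + 1)).card := Finset.card_le_card hsub
    _ = la + lb + 1 := Finset.card_range _

lemma coupling_finite (la lb : ℕ) (hla : 1 ≤ la) (hlb : 1 ≤ lb) :
    {c : List (ℕ × ℕ) | IsCouplingL la lb c}.Finite := by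
  have hsub : {c : List (ℕ × ℕ) | IsCouplingL la lb c} ⊆
      (fun l : List (Fin la × Fin lb) => l.map (fun p => ((p.1 : ℕ), (p.2 : ℕ)))) ''
        {l | l.length ≤ la + lb + 1} := by
    intro c hc
    have hb : ∀ p ∈ c, p.1 < la ∧ p.2 < lb := by
      intro p hp
      have := chain'_le_last hc.2.2 hc.2.1 p hp
      omega
    refine ⟨c.pmap (fun p h => ((⟨p.1, h.1⟩ : Fin la), (⟨p.2, h.2⟩ : Fin lb))) hb, ?_, ?_⟩
    · simp only [Set.mem_setOf_eq, List.length_pmap]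
      exact coupling_length_le hc
    · simp [List.map_pmap]
  exact Set.Finite.subset (Set.Finite.image _ (List.finite_length_le _ _)) hsub

lemma dFL_le_of {X : Type*} [MetricSpace X] [Inhabited X] {P Q : List X}
    {c : List (ℕ × ℕ)} {δ : ℝ}
    (hc : IsCouplingL P.length Q.length c) (h : costL P Q c ≤ δ) : dFL P Q ≤ δ := by
  refine le_trans (csInf_le ?_ ⟨c, hc, rfl⟩) h
  refine ⟨0, ?_⟩
  rintro r ⟨c', hc', rfl⟩
  exact foldr_max_nonneg _

lemma exists_coupling_cost_le {X : Type*} [MetricSpace X] [Inhabited X]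
    {P Q : List X} {δ : ℝ} (hP : P ≠ []) (hQ : Q ≠ []) (hd : dFL P Q ≤ δ) :
    ∃ c, IsCouplingL P.length Q.length c ∧ costL P Q c ≤ δ := by
  have hR : {r | ∃ c, IsCouplingL P.length Q.length c ∧ costL P Q c = r} =
      costL P Q '' {c | IsCouplingL P.length Q.length c} := by
    ext r
    simp [Set.mem_image]
  have hfin : {r | ∃ c, IsCouplingL P.length Q.length c ∧ costL P Q c = r}.Finite := by
    rw [hR]
    exact Set.Finite.image _ (coupling_finite _ _
      (List.length_pos_iff.mpr hP) (List.length_pos_iff.mpr hQ))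
  have hne : {r | ∃ c, IsCouplingL P.length Q.length c ∧ costL P Q c = r}.Nonempty := by
    obtain ⟨c, hc⟩ := exists_coupling P.length Q.length
      (List.length_pos_iff.mpr hP) (List.length_pos_iff.mpr hQ)
    exact ⟨costL P Q c, c, hc, rfl⟩
  obtain ⟨c, hc, hcost⟩ := hne.csInf_mem hfin
  refine ⟨c, hc, ?_⟩
  rw [hcost]
  exact hd

lemma sublist_drop_head {X : Type*} {A T : List X} (h : T.Sublist A) (hne : T ≠ []) :
    ∃ p, p < A.length ∧ T.Sublist (A.drop p) ∧ T.head? = (A.drop p).head? := by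
  induction h with
  | slnil => exact absurd rfl hne
  | cons a h ih =>
      obtain ⟨p, hp, hs, hh⟩ := ih hne
      exact ⟨p + 1, by simpa using hp, by simpa, by rw [List.drop_succ_cons]; exact hh⟩
  | @cons_cons l₁ l₂ a h ih =>
      exact ⟨0, by simp, by simpa using h.cons_cons a, by simp⟩

/-- Optimal substructure: `X[i+1, j+1] ≤ X[i+1, j]`, i.e. advancing the index
of `B` can only decrease the minimum over `i' ≥ i+1` of `O[i', ·]`. -/
theorem one_sided_dp_dominance {X : Type*} [MetricSpace X] [Inhabited X]
    (A B : List X) (hA : A ≠ []) (hB : B ≠ []) (δ : ℝ) (hδ : 0 < δ) :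
    ∀ i j, 1 ≤ j → j < B.length →
      XVal A B δ (i + 1) (j + 1) ≤ XVal A B δ (i + 1) j := by
  intro i j hj hjB
  simp only [XVal]
  apply Finset.le_inf
  intro i' hi'
  rw [Finset.mem_Icc] at hi'
  rw [OVal]
  apply le_sInf
  rintro z ⟨S, hS, hSne, hShead, hdF, rfl⟩
  have hSlen : 1 ≤ S.length := List.length_pos_iff.mpr hSne
  set B' := B.drop (j - 1) with hB'def
  have hB'len : B'.length = B.length - (j - 1) := List.length_drop
  have hB'2 : 2 ≤ B'.length := by omega
  have hB'ne : B' ≠ [] := List.length_pos_iff.mp (by omega)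
  obtain ⟨c, hc, hcost⟩ := exists_coupling_cost_le hSne hB'ne hdF
  obtain ⟨chh, chl, chc⟩ := hc
  set pr : ℕ × ℕ → Bool := fun p => p.2 == 0 with hprdef
  set c2 := c.dropWhile pr with hc2def
  set c1 := c.takeWhile pr with hc1def
  have hsplit : c1 ++ c2 = c := List.takeWhile_append_dropWhile
  have hc2chain : c2.Chain' StepN := chc.suffix (List.dropWhile_suffix pr)
  have hc2ne : c2 ≠ [] := by
    intro h
    have hall := List.dropWhile_eq_nil_iff.mp h
    have hmem : (S.length - 1, B'.length - 1) ∈ c := List.mem_of_getLast? chl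
    have := hall _ hmem
    simp only [hprdef, beq_iff_eq] at this
    omega
  -- head of c2
  obtain ⟨⟨k, b0⟩, hd2⟩ : ∃ q, c2.head? = some q := by
    cases h : c2.head? with
    | none => exact absurd (List.head?_eq_none_iff.mp h) hc2ne
    | some q => exact ⟨q, rfl⟩
  have hb0ne : b0 ≠ 0 := by
    have := List.head?_dropWhile_not pr c
    rw [← hc2def, hd2] at this
    simpa [hprdef] using this
  have hb01 : b0 = 1 := by
    rcases eq_or_ne c1 [] with h1 | h1
    · rw [h1, List.nil_append] at hsplit
      rw [hsplit, chh] at hd2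
      simp only [Option.some.injEq, Prod.mk.injEq] at hd2
      omega
    · have := List.isChain_append.mp (hsplit ▸ chc)
      obtain ⟨x, hx⟩ : ∃ x, c1.getLast? = some x := by
        cases h : c1.getLast? with
        | none => exact absurd (List.getLast?_eq_none_iff.mp h) h1
        | some q => exact ⟨q, rfl⟩
      have hstep := this.2.2 x hx (k, b0) hd2
      have hx2 : x.2 = 0 := by
        have := List.mem_takeWhile_imp (List.mem_of_getLast? hx)
        simpa [hprdef] using this
      obtain ⟨_, _, _, h4, _⟩ := hstep
      omega
  subst hb01
  have hkmem : (k, 1) ∈ c := (List.dropWhile_suffix pr).sublist.subset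
    (List.mem_of_mem_head? (by rw [hd2]; rfl))
  have hkle : k ≤ S.length - 1 := (chain'_le_last chc chl _ hkmem).1
  have hklt : k < S.length := by omega
  have hlow : ∀ p ∈ c2, k ≤ p.1 ∧ 1 ≤ p.2 := chain'_head_le hc2chain hd2
  -- last of c2
  have hgl2 : c2.getLast? = some (S.length - 1, B'.length - 1) := by
    rw [← hsplit, List.getLast?_append] at chl
    cases h : c2.getLast? with
    | none => exact absurd (List.getLast?_eq_none_iff.mp h) hc2ne
    | some q => rw [h] at chl; simpa using chl
  set shift : ℕ × ℕ → ℕ × ℕ := fun p => (p.1 - k, p.2 - 1) with hshiftdef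
  set c3 := c2.map shift with hc3def
  have hc3 : IsCouplingL (S.drop k).length (B.drop j).length c3 := by
    refine ⟨?_, ?_, ?_⟩
    · rw [hc3def, List.head?_map, hd2]
      simp [hshiftdef]
    · rw [hc3def, List.getLast?_map, hgl2]
      simp only [Option.map_some, Option.some.injEq, hshiftdef, List.length_drop,
        Prod.mk.injEq]
      constructor <;> omega
    · simp only [List.Chain']
      rw [hc3def, List.isChain_map]
      apply chain'_imp_mem hc2chain
      rintro ⟨a1, a2⟩ ha ⟨b1, b2⟩ hb hr
      have h1 := hlow _ ha
      have h2 := hlow _ hb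
      simp only at h1 h2
      obtain ⟨r1, r2, r3, r4, r5⟩ := hr
      simp only [ne_eq, Prod.mk.injEq, not_and] at r5
      simp only [hshiftdef, StepN, ne_eq, Prod.mk.injEq, not_and]
      refine ⟨by omega, by omega, by omega, by omega, by omega⟩
  have hcost3 : costL (S.drop k) (B.drop j) c3 ≤ δ := by
    rw [costL] at hcost ⊢
    have hmapeq : c3.map (fun p => dist ((S.drop k).getD p.1 default)
        ((B.drop j).getD p.2 default)) =
        c2.map (fun p => dist (S.getD p.1 default) (B'.getD p.2 default)) := by
      rw [hc3def, List.map_map]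
      apply List.map_congr_left
      intro p hp
      have hlp := hlow p hp
      simp only [Function.comp_apply, hshiftdef]
      congr 1
      · rw [List.getD_eq_getElem?_getD, List.getD_eq_getElem?_getD, List.getElem?_drop]
        rw [show k + (p.1 - k) = p.1 from by omega]
      · rw [List.getD_eq_getElem?_getD, List.getD_eq_getElem?_getD, hB'def,
          List.getElem?_drop, List.getElem?_drop]
        rw [show j + (p.2 - 1) = j - 1 + p.2 from by omega]
    rw [hmapeq]
    refine le_trans (foldr_max_sublist ?_) hcost
    exact ((List.dropWhile_suffix pr).sublist).map _
  have hdF3 : dFL (S.drop k) (B.drop j) ≤ δ := dFL_le_of hc3 hcost3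
  have hS'ne : S.drop k ≠ [] := by
    apply List.length_pos_iff.mp
    rw [List.length_drop]
    omega
  have hsub2 : (S.drop k).Sublist (A.drop (i' - 1)) := (List.drop_sublist k S).trans hS
  obtain ⟨p, hp, hsub', hh'⟩ := sublist_drop_head hsub2 hS'ne
  rw [List.drop_drop] at hsub' hh'
  rw [List.length_drop] at hp
  have hmem2 : i' + p ∈ Finset.Icc (i + 1) A.length := by
    rw [Finset.mem_Icc]
    omega
  have hidx : i' + p - 1 = i' - 1 + p := by omega
  have hO : OVal A B δ (i' + p) (j + 1) ≤ ((S.drop k).length : ℕ∞) := by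
    apply sInf_le
    refine ⟨S.drop k, ?_, hS'ne, ?_, ?_, rfl⟩
    · rw [hidx]; exact hsub'
    · rw [hidx]; exact hh'
    · simpa using hdF3
  calc (Finset.Icc (i + 1) A.length).inf (fun i'' => OVal A B δ i'' (j + 1))
      ≤ OVal A B δ (i' + p) (j + 1) := Finset.inf_le hmem2
    _ ≤ ((S.drop k).length : ℕ∞) := hO
    _ ≤ (S.length : ℕ∞) := by
        rw [List.length_drop]
        exact_mod_cast Nat.sub_le _ _
end
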